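/- arXiv:1507.02546 — 2 statements merged into one kernel-verified Lean document; each statement's English description precedes it below -/
import Mathlib

section
/- Let G be a finite connected simple graph with ε ≥ 1 edges and let Γ_G be its edge-set graph. Then the minimum degree of Γ_G satisfies δ(Γ_G) ≥ 2(ε − 1). -/
open scoped Classical

/-- Two edges (as elements of `Sym2 V`) are *adjacent* if they are distinct and
share a common endpoint. -/
def EdgeAdj {V : Type*} (e f : Sym2 V) : Prop := e ≠ f ∧ ∃ v, v ∈ e ∧ v ∈ f

lemma EdgeAdj.symm {V : Type*} {e f : Sym2 V} (h : EdgeAdj e f) : EdgeAdj f e :=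
  ⟨h.1.symm, h.2.elim fun v hv => ⟨v, hv.2, hv.1⟩⟩

/-- The *edge-set graph* of a simple graph `G`: its vertices are the nonempty
(finite) subsets of the edge set of `G`, two distinct such subsets being adjacent
if and only if some edge in the first is adjacent to some edge in the second. -/
def edgeSetGraph {V : Type*} (G : SimpleGraph V) :
    SimpleGraph {S : Finset (Sym2 V) // ↑S ⊆ G.edgeSet ∧ S.Nonempty} where
  Adj A B := A ≠ B ∧ ∃ e ∈ A.1, ∃ f ∈ B.1, EdgeAdj e f
  symm := by
    refine ⟨?_⟩
    rintro A B ⟨hAB, e, he, f, hf, hef⟩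
    exact ⟨hAB.symm, f, hf, e, he, hef.symm⟩
  loopless := by refine ⟨?_⟩; rintro A ⟨h, -⟩; exact h rfl

/- ### Auxiliary numeric lemmas -/

lemma aux_two_mul_le_two_pow : ∀ n : ℕ, 2 * n ≤ 2 ^ n := by
  intro n
  induction n with
  | zero => simp
  | succ m ih =>
      rcases Nat.eq_zero_or_pos m with rfl | hm
      · norm_num
      · have h1 : 2 ≤ 2 ^ m := by
          calc 2 = 2 * 1 := by ring
          _ ≤ 2 * m := by omega
          _ ≤ 2 ^ m := ih
        calc 2 * (m + 1) = 2 * m + 2 := by ring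
        _ ≤ 2 ^ m + 2 ^ m := by omega
        _ = 2 ^ (m + 1) := by ring

lemma aux_two_mul_add_three : ∀ n : ℕ, 2 * n + 3 ≤ 3 * 2 ^ n := by
  intro n
  induction n with
  | zero => norm_num
  | succ m ih =>
      have h1 : 1 ≤ 2 ^ m := Nat.one_le_two_pow
      calc 2 * (m + 1) + 3 = (2 * m + 3) + 2 := by ring
      _ ≤ 3 * 2 ^ m + 3 * 2 ^ m := by omega
      _ = 3 * 2 ^ (m + 1) := by ring

/- ### Counting subsets meeting a fixed set -/

lemma aux_card_filter_inter {α : Type*} [DecidableEq α] (E M : Finset α) (hM : M ⊆ E) :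
    (E.powerset.filter fun T => (T ∩ M).Nonempty).card =
      2 ^ E.card - 2 ^ (E.card - M.card) := by
  have hsplit := Finset.card_filter_add_card_filter_not
    (s := E.powerset) (p := fun T => (T ∩ M).Nonempty)
  have hneg : (E.powerset.filter fun T => ¬ (T ∩ M).Nonempty) = (E \ M).powerset := by
    ext T
    simp only [Finset.mem_filter, Finset.mem_powerset, Finset.not_nonempty_iff_eq_empty,
      ← Finset.disjoint_iff_inter_eq_empty, Finset.subset_sdiff]
  have hcard1 : E.powerset.card = 2 ^ E.card := Finset.card_powerset E
  have hcard2 : (E \ M).powerset.card = 2 ^ (E.card - M.card) := by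
    rw [Finset.card_powerset, Finset.card_sdiff_of_subset hM]
  have hle : 2 ^ (E.card - M.card) ≤ 2 ^ E.card :=
    Nat.pow_le_pow_right (by norm_num) (Nat.sub_le _ _)
  rw [hneg, hcard2, hcard1] at hsplit
  omega

/- ### In a connected graph with at least two edges, every edge has an adjacent edge -/

lemma aux_exists_adj_edge {V : Type*} [Fintype V] (G : SimpleGraph V) (hconn : G.Connected)
    (hcard : 2 ≤ G.edgeFinset.card) {e : Sym2 V} (he : e ∈ G.edgeSet) :
    ∃ f ∈ G.edgeSet, EdgeAdj e f := by
  induction e using Sym2.ind with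
  | _ a b =>
  have hab : G.Adj a b := he
  by_contra hcon
  push_neg at hcon
  -- any vertex reachable from a (or b) lies in {a, b}
  have key : ∀ {u c : V}, G.Walk u c → u = a ∨ u = b → c = a ∨ c = b := by
    intro u c w
    induction w with
    | nil => exact id
    | @cons u v c h p ih =>
        intro hu
        have hmem : s(u, v) ∈ G.edgeSet := h
        by_cases heq : s(u, v) = s(a, b)
        · rw [Sym2.eq_iff] at heq
          rcases heq with ⟨-, rfl⟩ | ⟨-, rfl⟩
          · exact ih (Or.inr rfl)
          · exact ih (Or.inl rfl)
        · exfalso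
          refine hcon s(u, v) hmem ⟨Ne.symm heq, u, ?_, Sym2.mem_mk_left u v⟩
          rcases hu with rfl | rfl
          · exact Sym2.mem_mk_left _ _
          · exact Sym2.mem_mk_right _ _
  -- get a second edge
  obtain ⟨x, hx, y, hy, hxy⟩ := Finset.one_lt_card.mp hcard
  have hexists : ∃ f ∈ G.edgeSet, f ≠ s(a, b) := by
    by_cases hxe : x = s(a, b)
    · exact ⟨y, (SimpleGraph.mem_edgeFinset).mp hy, by rw [← hxe]; exact hxy.symm⟩
    · exact ⟨x, (SimpleGraph.mem_edgeFinset).mp hx, hxe⟩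
  obtain ⟨f, hf, hfe⟩ := hexists
  obtain ⟨c, hc⟩ : ∃ c, c ∈ f := ⟨f.out.1, Sym2.out_fst_mem f⟩
  have hcab : c = a ∨ c = b := key ((hconn.preconnected a c).some) (Or.inl rfl)
  refine hcon f hf ⟨Ne.symm hfe, c, ?_, hc⟩
  rcases hcab with rfl | rfl
  · exact Sym2.mem_mk_left _ _
  · exact Sym2.mem_mk_right _ _

/- ### Degree lower bound via subsets meeting a set of edges adjacent to `A` -/

lemma aux_degree_ge {V : Type*} [Fintype V] (G : SimpleGraph V)
    (A : {S : Finset (Sym2 V) // ↑S ⊆ G.edgeSet ∧ S.Nonempty})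
    (M : Finset (Sym2 V)) (hM : M ⊆ G.edgeFinset)
    (hadj : ∀ g ∈ M, ∃ y ∈ A.1, EdgeAdj g y) :
    ((G.edgeFinset.powerset.filter fun T => (T ∩ M).Nonempty).erase A.1).card ≤
      (edgeSetGraph G).degree A := by
  classical
  rw [SimpleGraph.degree]
  apply Finset.card_le_card_of_injOn
    (fun (T : Finset (Sym2 V)) => if h : ↑T ⊆ G.edgeSet ∧ T.Nonempty then (⟨T, h⟩ : {S : Finset (Sym2 V) // ↑S ⊆ G.edgeSet ∧ S.Nonempty}) else A)
  · intro T hT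
    obtain ⟨hTne, hTfil⟩ := Finset.mem_erase.mp hT
    obtain ⟨hTsub, hTint⟩ := Finset.mem_filter.mp hTfil
    rw [Finset.mem_powerset] at hTsub
    obtain ⟨g, hg⟩ := hTint
    have hgT : g ∈ T := (Finset.mem_inter.mp hg).1
    have hgM : g ∈ M := (Finset.mem_inter.mp hg).2
    have hprop : ↑T ⊆ G.edgeSet ∧ T.Nonempty := by
      constructor
      · intro s hs
        exact (SimpleGraph.mem_edgeFinset).mp (hTsub hs)
      · exact ⟨g, hgT⟩
    simp only [dif_pos hprop, Finset.mem_coe]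
    rw [SimpleGraph.mem_neighborFinset]
    obtain ⟨y, hyA, hgy⟩ := hadj g hgM
    refine ⟨?_, y, hyA, g, hgT, hgy.symm⟩
    intro hcontra
    exact hTne (congrArg Subtype.val hcontra).symm
  · intro T1 hT1 T2 hT2 heq
    obtain ⟨hT1ne, hT1fil⟩ := Finset.mem_erase.mp hT1
    obtain ⟨hT2ne, hT2fil⟩ := Finset.mem_erase.mp hT2
    obtain ⟨hT1sub, hT1int⟩ := Finset.mem_filter.mp hT1fil
    obtain ⟨hT2sub, hT2int⟩ := Finset.mem_filter.mp hT2fil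
    rw [Finset.mem_powerset] at hT1sub hT2sub
    have h1 : ↑T1 ⊆ G.edgeSet ∧ T1.Nonempty :=
      ⟨fun s hs => (SimpleGraph.mem_edgeFinset).mp (hT1sub hs),
        hT1int.mono (Finset.inter_subset_left)⟩
    have h2 : ↑T2 ⊆ G.edgeSet ∧ T2.Nonempty :=
      ⟨fun s hs => (SimpleGraph.mem_edgeFinset).mp (hT2sub hs),
        hT2int.mono (Finset.inter_subset_left)⟩
    simp only [dif_pos h1, dif_pos h2, Subtype.mk.injEq] at heq
    exact heq

/-- For a finite connected simple graph `G` with `ε ≥ 1` edges, the minimum degree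
of the edge-set graph `Γ_G` is at least `2(ε - 1)`. -/
theorem stmt_2 {V : Type*} [Fintype V] (G : SimpleGraph V) (hconn : G.Connected)
    (hE : 1 ≤ G.edgeFinset.card) :
    2 * (G.edgeFinset.card - 1) ≤ (edgeSetGraph G).minDegree := by
  classical
  obtain ⟨e0, he0⟩ := Finset.card_pos.mp hE
  haveI : Nonempty {S : Finset (Sym2 V) // ↑S ⊆ G.edgeSet ∧ S.Nonempty} :=
    ⟨⟨{e0}, by
      simp only [Finset.coe_singleton, Set.singleton_subset_iff]
      exact (SimpleGraph.mem_edgeFinset).mp he0, Finset.singleton_nonempty e0⟩⟩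
  apply SimpleGraph.le_minDegree_of_forall_le_degree
  intro A
  set ε := G.edgeFinset.card with hε
  rcases eq_or_lt_of_le hE with h1 | h2
  · rw [← h1]; simp
  · -- ε ≥ 2
    obtain ⟨e, heS⟩ := A.2.2
    have heE : e ∈ G.edgeSet := A.2.1 heS
    by_cases hcase : ∃ x ∈ A.1, ∃ y ∈ A.1, EdgeAdj x y
    · -- two adjacent edges inside A
      obtain ⟨x, hx, y, hy, hxy⟩ := hcase
      set M : Finset (Sym2 V) := {x, y} with hM
      have hMsub : M ⊆ G.edgeFinset := by
        intro g hg
        rcases Finset.mem_insert.mp hg with rfl | hg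
        · exact (SimpleGraph.mem_edgeFinset).mpr (A.2.1 hx)
        · rw [Finset.mem_singleton] at hg; subst hg
          exact (SimpleGraph.mem_edgeFinset).mpr (A.2.1 hy)
      have hMcard : M.card = 2 := Finset.card_pair hxy.1
      have hadj : ∀ g ∈ M, ∃ z ∈ A.1, EdgeAdj g z := by
        intro g hg
        rcases Finset.mem_insert.mp hg with rfl | hg
        · exact ⟨y, hy, hxy⟩
        · rw [Finset.mem_singleton] at hg; subst hg
          exact ⟨x, hx, hxy.symm⟩
      have hdeg := aux_degree_ge G A M hMsub hadj
      have hfil : (G.edgeFinset.powerset.filter fun T => (T ∩ M).Nonempty).card =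
          2 ^ ε - 2 ^ (ε - 2) := by
        rw [aux_card_filter_inter _ _ hMsub, hMcard]
      have herase : (G.edgeFinset.powerset.filter fun T => (T ∩ M).Nonempty).card - 1 ≤
          ((G.edgeFinset.powerset.filter fun T => (T ∩ M).Nonempty).erase A.1).card :=
        Finset.pred_card_le_card_erase
      have hnum : 2 * (ε - 1) ≤ 2 ^ ε - 2 ^ (ε - 2) - 1 := by
        have h4 : 2 ^ ε = 4 * 2 ^ (ε - 2) := by
          obtain ⟨m, hm⟩ : ∃ m, ε = m + 2 := ⟨ε - 2, by omega⟩
          rw [hm, Nat.add_sub_cancel, pow_add]; ring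
        have := aux_two_mul_add_three (ε - 2)
        omega
      omega
    · -- no two adjacent edges inside A
      push_neg at hcase
      obtain ⟨f, hfE, hef⟩ := aux_exists_adj_edge G hconn h2 heE
      set M : Finset (Sym2 V) := {f} with hM
      have hMsub : M ⊆ G.edgeFinset := by
        intro g hg
        rw [hM, Finset.mem_singleton] at hg; subst hg
        exact (SimpleGraph.mem_edgeFinset).mpr hfE
      have hadj : ∀ g ∈ M, ∃ z ∈ A.1, EdgeAdj g z := by
        intro g hg
        rw [hM, Finset.mem_singleton] at hg; subst hg
        exact ⟨e, heS, hef.symm⟩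
      have hdeg := aux_degree_ge G A M hMsub hadj
      have hfS : f ∉ A.1 := fun hfA => hcase e heS f hfA hef
      have hnotmem : A.1 ∉ G.edgeFinset.powerset.filter fun T => (T ∩ M).Nonempty := by
        intro hmem
        obtain ⟨-, g, hg⟩ := Finset.mem_filter.mp hmem
        have hgA : g ∈ A.1 := (Finset.mem_inter.mp hg).1
        have hgM : g ∈ M := (Finset.mem_inter.mp hg).2
        rw [hM, Finset.mem_singleton] at hgM; subst hgM
        exact hfS hgA
      rw [Finset.erase_eq_of_notMem hnotmem] at hdeg
      have hfil : (G.edgeFinset.powerset.filter fun T => (T ∩ M).Nonempty).card =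
          2 ^ ε - 2 ^ (ε - 1) := by
        rw [aux_card_filter_inter _ _ hMsub, hM, Finset.card_singleton]
      have hnum : 2 * (ε - 1) ≤ 2 ^ ε - 2 ^ (ε - 1) := by
        have h2p : 2 ^ ε = 2 * 2 ^ (ε - 1) := by
          obtain ⟨m, hm⟩ : ∃ m, ε = m + 1 := ⟨ε - 1, by omega⟩
          rw [hm, Nat.add_sub_cancel, pow_add]; ring
        have := aux_two_mul_le_two_pow (ε - 1)
        omega
      omega
end

section
/- For every n ≥ 4, the path P_n has exactly one connected edge dominating set of minimum cardinality, namely the set of its internal edges {e_2, e_3, …, e_{n−2}} (labelling the edges consecutively as e_1, …, e_{n−1}); that is, the connected edge domination index of P_n is 1. -/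
open scoped Classical

/-- The edge set `X` induces a connected subgraph: the graph on the endpoints of
edges of `X`, with edge set `X`, is connected. -/
def IsConnectedEdgeSet {V : Type*} (X : Set (Sym2 V)) : Prop :=
  ((SimpleGraph.fromEdgeSet X).induce {v | ∃ e ∈ X, v ∈ e}).Connected

/-- `X` is a *connected edge dominating set* of `G`: a set of edges of `G` such that
every edge of `G` not in `X` is adjacent to some edge of `X`, and the subgraph of `G`
induced by the edge set `X` is connected. -/
def IsCEDS {V : Type*} (G : SimpleGraph V) (X : Finset (Sym2 V)) : Prop :=
  ↑X ⊆ G.edgeSet ∧ (∀ e ∈ G.edgeSet, e ∉ X → ∃ f ∈ X, EdgeAdj e f) ∧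
    IsConnectedEdgeSet (X : Set (Sym2 V))

/-- `X` is a connected edge dominating set of `G` of minimum cardinality. -/
def IsMinCEDS {V : Type*} (G : SimpleGraph V) (X : Finset (Sym2 V)) : Prop :=
  IsCEDS G X ∧ ∀ Y : Finset (Sym2 V), IsCEDS G Y → X.card ≤ Y.card

open Fin.NatCast

namespace CEDSAux

open SimpleGraph

variable {n : ℕ}

/-- the `i`-th edge of the path graph (valid for `i + 1 < n`). -/
def fe (n : ℕ) [NeZero n] (i : ℕ) : Sym2 (Fin n) := s((i : Fin n), ((i+1 : ℕ) : Fin n))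

lemma cast_val [NeZero n] {i : ℕ} (h : i < n) : ((i : Fin n) : ℕ) = i := by
  simp [Fin.val_natCast, Nat.mod_eq_of_lt h]

lemma fe_inj [NeZero n] {i j : ℕ} (hi : i + 1 < n) (hj : j + 1 < n)
    (h : fe n i = fe n j) : i = j := by
  rw [fe, fe, Sym2.eq_iff] at h
  have h1 := cast_val (n := n) (by omega : i < n)
  have h2 := cast_val (n := n) hi
  have h3 := cast_val (n := n) (by omega : j < n)
  have h4 := cast_val (n := n) hj
  rcases h with ⟨ha, hb⟩ | ⟨ha, hb⟩ <;>
    [skip; skip] <;>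
    · have := congrArg Fin.val ha
      have := congrArg Fin.val hb
      omega

lemma edge_mem_iff [NeZero n] {e : Sym2 (Fin n)} :
    e ∈ (pathGraph n).edgeSet ↔ ∃ i, i + 1 < n ∧ e = fe n i := by
  induction e using Sym2.ind with
  | _ u v =>
    rw [mem_edgeSet, pathGraph_adj]
    constructor
    · rintro (h | h)
      · refine ⟨u.val, by omega, ?_⟩
        rw [fe, Sym2.eq_iff]
        left
        constructor <;> apply Fin.ext <;>
          rw [cast_val (by omega)] <;> omega
      · refine ⟨v.val, by omega, ?_⟩
        rw [fe, Sym2.eq_iff]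
        right
        constructor <;> apply Fin.ext <;>
          rw [cast_val (by omega)] <;> omega
    · rintro ⟨i, hi, h⟩
      rw [fe, Sym2.eq_iff] at h
      have h1 := cast_val (n := n) (by omega : i < n)
      have h2 := cast_val (n := n) hi
      rcases h with ⟨ha, hb⟩ | ⟨ha, hb⟩ <;> subst ha <;> subst hb <;> omega

end CEDSAux

namespace CEDSAux

open SimpleGraph

lemma cut {n : ℕ} [NeZero n] {Y : Set (Sym2 (Fin n))}
    (hY : Y ⊆ (pathGraph n).edgeSet) (hc : IsConnectedEdgeSet Y)
    {u v : Fin n} (hu : ∃ e ∈ Y, u ∈ e) (hv : ∃ e ∈ Y, v ∈ e)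
    {c : ℕ} (hcu : (u : ℕ) ≤ c) (hcv : c < (v : ℕ)) :
    fe n c ∈ Y := by
  have hreach := hc.preconnected ⟨u, hu⟩ ⟨v, hv⟩
  obtain ⟨w⟩ := hreach
  clear hc
  suffices H : ∀ (x y : {v : Fin n | ∃ e ∈ Y, v ∈ e})
      (_ : ((fromEdgeSet Y).induce {v | ∃ e ∈ Y, v ∈ e}).Walk x y),
      (x.1 : ℕ) ≤ c → c < (y.1 : ℕ) → fe n c ∈ Y by
    exact H _ _ w hcu hcv
  clear hcu hcv w u v hu hv
  intro x y w
  induction w with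
  | nil => intro h1 h2; omega
  | @cons a b y hadj p ih =>
    intro h1 h2
    rw [comap_adj] at hadj
    rw [fromEdgeSet_adj] at hadj
    obtain ⟨hmem, hne⟩ := hadj
    have hedge := edge_mem_iff.mp (hY hmem)
    obtain ⟨i, hi, heq⟩ := hedge
    have hvals : ((a.1 : ℕ) = i ∧ (b.1 : ℕ) = i + 1) ∨ ((a.1 : ℕ) = i + 1 ∧ (b.1 : ℕ) = i) := by
      rw [fe, Sym2.eq_iff] at heq
      have h3 := cast_val (n := n) (by omega : i < n)
      have h4 := cast_val (n := n) hi
      simp only [Function.Embedding.coe_subtype] at heq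
      rcases heq with ⟨ha, hb⟩ | ⟨ha, hb⟩
      · left; rw [ha, hb, h3, h4]; exact ⟨rfl, rfl⟩
      · right; rw [ha, hb, h3, h4]; exact ⟨rfl, rfl⟩
    by_cases hb : (b.1 : ℕ) ≤ c
    · exact ih hb h2
    · push_neg at hb
      have : i = c := by omega
      subst this
      rwa [← heq]

end CEDSAux

namespace CEDSAux

open SimpleGraph

def X0 (n : ℕ) [NeZero n] : Finset (Sym2 (Fin n)) := (Finset.Icc 1 (n-3)).image (fe n)

lemma mem_X0 [NeZero n] (hn : 4 ≤ n) {e : Sym2 (Fin n)} :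
    e ∈ X0 n ↔ ∃ i, 1 ≤ i ∧ i ≤ n - 3 ∧ e = fe n i := by
  simp only [X0, Finset.mem_image, Finset.mem_Icc]
  constructor
  · rintro ⟨i, ⟨h1, h2⟩, rfl⟩; exact ⟨i, h1, h2, rfl⟩
  · rintro ⟨i, h1, h2, rfl⟩; exact ⟨i, ⟨h1, h2⟩, rfl⟩

lemma card_X0 [NeZero n] (hn : 4 ≤ n) : (X0 n).card = n - 3 := by
  have hinj : Set.InjOn (fe n) ↑(Finset.Icc 1 (n-3)) := by
    intro i hi j hj h
    rw [Finset.coe_Icc, Set.mem_Icc] at hi hj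
    exact fe_inj (by omega) (by omega) h
  rw [X0, Finset.card_image_of_injOn hinj, Nat.card_Icc]
  omega

lemma mem_vertex_X0 [NeZero n] (hn : 4 ≤ n) {v : Fin n} :
    (∃ e ∈ (X0 n : Set (Sym2 (Fin n))), v ∈ e) ↔ 1 ≤ (v : ℕ) ∧ (v : ℕ) ≤ n - 2 := by
  constructor
  · rintro ⟨e, he, hv⟩
    rw [Finset.mem_coe, mem_X0 hn] at he
    obtain ⟨i, h1, h2, rfl⟩ := he
    rw [fe, Sym2.mem_iff] at hv
    rcases hv with rfl | rfl <;> rw [cast_val (by omega)] <;> omega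
  · rintro ⟨h1, h2⟩
    by_cases h : (v : ℕ) ≤ n - 3
    · refine ⟨fe n v, ?_, ?_⟩
      · rw [Finset.mem_coe, mem_X0 hn]; exact ⟨v, h1, h, rfl⟩
      · rw [fe, Sym2.mem_iff]; left; exact (Fin.cast_val_eq_self v).symm
    · refine ⟨fe n (n-3), ?_, ?_⟩
      · rw [Finset.mem_coe, mem_X0 hn]; exact ⟨n-3, by omega, le_refl _, rfl⟩
      · rw [fe, Sym2.mem_iff]; right
        apply Fin.ext
        rw [cast_val (by omega)]; omega

lemma X0_subset [NeZero n] (hn : 4 ≤ n) : (X0 n : Set (Sym2 (Fin n))) ⊆ (pathGraph n).edgeSet := by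
  intro e he
  rw [Finset.mem_coe, mem_X0 hn] at he
  obtain ⟨i, h1, h2, rfl⟩ := he
  exact edge_mem_iff.mpr ⟨i, by omega, rfl⟩

lemma X0_connected [NeZero n] (hn : 4 ≤ n) : IsConnectedEdgeSet (X0 n : Set (Sym2 (Fin n))) := by
  rw [IsConnectedEdgeSet]
  have htmem : ∃ e ∈ (X0 n : Set (Sym2 (Fin n))), ((1 : ℕ) : Fin n) ∈ e := by
    rw [mem_vertex_X0 hn, cast_val (by omega)]; omega
  set t : {v : Fin n | ∃ e ∈ (X0 n : Set (Sym2 (Fin n))), v ∈ e} := ⟨((1:ℕ) : Fin n), htmem⟩ with ht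
  rw [connected_iff]
  constructor
  · -- preconnected
    have key : ∀ k (v : {v : Fin n | ∃ e ∈ (X0 n : Set (Sym2 (Fin n))), v ∈ e}),
        (v.1 : ℕ) = k →
        ((fromEdgeSet (X0 n : Set (Sym2 (Fin n)))).induce _).Reachable v t := by
      intro k
      induction k using Nat.strong_induction_on with
      | _ k ih =>
        intro v hvk
        have hv1 := (mem_vertex_X0 hn).mp v.2
        by_cases hk : k = 1
        · have : v = t := by
            apply Subtype.ext; apply Fin.ext
            rw [ht]; simp only
            rw [cast_val (by omega)]; omega
          rw [this]
        · have hk2 : 2 ≤ k := by omega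
          have hwmem : ∃ e ∈ (X0 n : Set (Sym2 (Fin n))), (((k-1 : ℕ)) : Fin n) ∈ e := by
            rw [mem_vertex_X0 hn, cast_val (by omega)]; omega
          set w : {v : Fin n | ∃ e ∈ (X0 n : Set (Sym2 (Fin n))), v ∈ e} :=
            ⟨(((k-1:ℕ)) : Fin n), hwmem⟩ with hw
          have hadj : ((fromEdgeSet (X0 n : Set (Sym2 (Fin n)))).induce _).Adj v w := by
            rw [comap_adj, fromEdgeSet_adj]
            simp only [Function.Embedding.coe_subtype]
            constructor
            · have heq : s((v : Fin n), (w : Fin n)) = fe n (k-1) := by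
                rw [fe, Sym2.eq_iff]; right
                constructor
                · apply Fin.ext; rw [cast_val (by omega)]; omega
                · rfl
              rw [heq, Finset.mem_coe, mem_X0 hn]
              exact ⟨k-1, by omega, by omega, rfl⟩
            · intro hvw
              have h5 := congrArg Fin.val hvw
              rw [cast_val (show k - 1 < n by omega)] at h5
              omega
          exact (hadj.reachable).trans (ih (k-1) (by omega) w (by rw [hw]; exact cast_val (by omega)))
    intro a b
    exact ((key _ a rfl).trans (key _ b rfl).symm)
  · exact ⟨t⟩

end CEDSAux

namespace CEDSAux

open SimpleGraph

lemma mem_fe [NeZero n] {i : ℕ} {v : Fin n} (h : (v : ℕ) = i ∨ (v : ℕ) = i + 1)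
    (hi : i + 1 < n) : v ∈ fe n i := by
  rw [fe, Sym2.mem_iff]
  rcases h with h | h
  · left; apply Fin.ext; rw [cast_val (by omega)]; omega
  · right; apply Fin.ext; rw [cast_val (by omega)]; omega

lemma X0_ceds [NeZero n] (hn : 4 ≤ n) : IsCEDS (pathGraph n) (X0 n) := by
  refine ⟨X0_subset hn, ?_, X0_connected hn⟩
  intro e he hne
  rw [edge_mem_iff] at he
  obtain ⟨i, hi, rfl⟩ := he
  rw [mem_X0 hn] at hne
  push_neg at hne
  have : i = 0 ∨ i = n - 2 := by
    by_contra h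
    push_neg at h
    exact hne i (by omega) (by omega) rfl
  rcases this with rfl | rfl
  · refine ⟨fe n 1, ?_, ?_, ?_⟩
    · rw [mem_X0 hn]; exact ⟨1, le_refl _, by omega, rfl⟩
    · intro h; exact absurd (fe_inj (by omega) (by omega) h) (by omega)
    · exact ⟨((1:ℕ) : Fin n), mem_fe (by rw [cast_val (by omega)]; omega) (by omega),
        mem_fe (by rw [cast_val (by omega)]; omega) (by omega)⟩
  · refine ⟨fe n (n-3), ?_, ?_, ?_⟩
    · rw [mem_X0 hn]; exact ⟨n-3, by omega, le_refl _, rfl⟩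
    · intro h; exact absurd (fe_inj (by omega) (by omega) h) (by omega)
    · exact ⟨(((n-2:ℕ)) : Fin n), mem_fe (by rw [cast_val (by omega)]; omega) (by omega),
        mem_fe (by rw [cast_val (by omega)]; omega) (by omega)⟩

end CEDSAux

namespace CEDSAux

open SimpleGraph

lemma main_bound [NeZero n] (hn : 4 ≤ n) (Y : Finset (Sym2 (Fin n)))
    (hY : IsCEDS (pathGraph n) Y) :
    n - 3 ≤ Y.card ∧ (Y.card = n - 3 → Y = X0 n) := by
  obtain ⟨hsub, hdom, hconn⟩ := hY
  set S : Finset ℕ := (Finset.range (n-1)).filter (fun i => fe n i ∈ Y) with hS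
  have hmemS : ∀ i, i ∈ S ↔ i + 1 < n ∧ fe n i ∈ Y := by
    intro i; rw [hS, Finset.mem_filter, Finset.mem_range]
    constructor <;> rintro ⟨h1, h2⟩ <;> exact ⟨by omega, h2⟩
  -- Y is the image of S
  have hYim : Y = S.image (fe n) := by
    ext e
    rw [Finset.mem_image]
    constructor
    · intro he
      obtain ⟨i, hi, rfl⟩ := edge_mem_iff.mp (hsub he)
      exact ⟨i, (hmemS i).mpr ⟨hi, he⟩, rfl⟩
    · rintro ⟨i, hi, rfl⟩
      exact ((hmemS i).mp hi).2
  have hcard : Y.card = S.card := by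
    rw [hYim, Finset.card_image_of_injOn]
    intro i hi j hj h
    exact fe_inj ((hmemS i).mp hi).1 ((hmemS j).mp hj).1 h
  -- S is nonempty
  have hSne : S.Nonempty := by
    obtain ⟨v⟩ := hconn.nonempty
    obtain ⟨e, he, -⟩ := v.2
    rw [Finset.mem_coe] at he
    obtain ⟨i, hi, rfl⟩ := edge_mem_iff.mp (hsub he)
    exact ⟨i, (hmemS i).mpr ⟨hi, he⟩⟩
  -- interval property
  have hint : ∀ a ∈ S, ∀ b ∈ S, ∀ c, a ≤ c → c ≤ b → c ∈ S := by
    intro a ha b hb c hac hcb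
    obtain ⟨ha1, ha2⟩ := (hmemS a).mp ha
    obtain ⟨hb1, hb2⟩ := (hmemS b).mp hb
    rw [hmemS]
    refine ⟨by omega, ?_⟩
    refine cut hsub hconn (u := ((a:ℕ) : Fin n)) (v := (((b+1:ℕ)) : Fin n))
      ⟨fe n a, ha2, mem_fe (by rw [cast_val (by omega)]; omega) ha1⟩
      ⟨fe n b, hb2, mem_fe (by rw [cast_val (by omega)]; omega) hb1⟩
      ?_ ?_
    · rw [cast_val (by omega)]; omega
    · rw [cast_val (by omega)]; omega
  -- left end: 0 ∈ S ∨ 1 ∈ S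
  have hend : ∀ p, p + 1 < n → fe n p ∉ Y →
      ∃ j, j + 1 < n ∧ fe n j ∈ Y ∧ j ≠ p ∧ (j = p + 1 ∨ p = j + 1) := by
    intro p hp hpY
    obtain ⟨f, hf, hne, w, hw1, hw2⟩ := hdom (fe n p) (edge_mem_iff.mpr ⟨p, hp, rfl⟩) hpY
    obtain ⟨j, hj, rfl⟩ := edge_mem_iff.mp (hsub hf)
    have hjp : j ≠ p := fun h => hne (by rw [h])
    rw [fe, Sym2.mem_iff] at hw1 hw2
    have hww : (w : ℕ) = p ∨ (w : ℕ) = p + 1 := by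
      rcases hw1 with rfl | rfl
      · left; exact cast_val (by omega)
      · right; exact cast_val (by omega)
    have hww2 : (w : ℕ) = j ∨ (w : ℕ) = j + 1 := by
      rcases hw2 with rfl | rfl
      · left; exact cast_val (by omega)
      · right; exact cast_val (by omega)
    exact ⟨j, hj, hf, hjp, by omega⟩
  have hleft : 0 ∈ S ∨ 1 ∈ S := by
    by_cases h0 : fe n 0 ∈ Y
    · left; exact (hmemS 0).mpr ⟨by omega, h0⟩
    · obtain ⟨j, hj, hjY, hjne, hcases⟩ := hend 0 (by omega) h0
      right
      have : j = 1 := by omega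
      subst this
      exact (hmemS 1).mpr ⟨hj, hjY⟩
  have hright : (n-2) ∈ S ∨ (n-3) ∈ S := by
    by_cases h0 : fe n (n-2) ∈ Y
    · left; exact (hmemS (n-2)).mpr ⟨by omega, h0⟩
    · obtain ⟨j, hj, hjY, hjne, hcases⟩ := hend (n-2) (by omega) h0
      right
      have : j = n - 3 := by omega
      subst this
      exact (hmemS (n-3)).mpr ⟨hj, hjY⟩
  set m := S.min' hSne with hm
  set M := S.max' hSne with hM
  have hmM : m ≤ M := S.min'_le _ (S.max'_mem hSne)
  have hm1 : m ≤ 1 := by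
    rcases hleft with h | h
    · exact le_trans (S.min'_le _ h) (by omega)
    · exact S.min'_le _ h
  have hM1 : n - 3 ≤ M := by
    rcases hright with h | h
    · exact le_trans (by omega) (S.le_max' _ h)
    · exact S.le_max' _ h
  have hIcc : Finset.Icc m M ⊆ S := by
    intro c hc
    rw [Finset.mem_Icc] at hc
    exact hint m (S.min'_mem hSne) M (S.max'_mem hSne) c hc.1 hc.2
  have hcard2 : M + 1 - m ≤ S.card := by
    calc M + 1 - m = (Finset.Icc m M).card := by rw [Nat.card_Icc]
    _ ≤ S.card := Finset.card_le_card hIcc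
  have hMn : M ≤ n - 2 := by
    have := ((hmemS M).mp (S.max'_mem hSne)).1
    omega
  constructor
  · omega
  · intro hc3
    have hSeq : S = Finset.Icc m M :=
      (Finset.eq_of_subset_of_card_le hIcc (by rw [Nat.card_Icc]; omega)).symm
    have hm' : m = 1 ∧ M = n - 3 := by
      constructor <;> omega
    rw [hYim, hSeq, hm'.1, hm'.2, X0]
end CEDSAux

open CEDSAux

/-- For `n ≥ 4`, the path `P_n` (vertices `0, 1, …, n-1` in `Fin n`, edges
`e_i = s(i-1, i)` for `1 ≤ i ≤ n-1`) has exactly one connected edge dominating set of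
minimum cardinality, namely the set of its internal edges
`{e_2, …, e_{n-2}} = {s(j, j+1) : 1 ≤ j ≤ n-3}`; i.e. its CED-index is `1`. -/
theorem stmt_9 (n : ℕ) (hn : 4 ≤ n) :
    {X : Finset (Sym2 (Fin n)) | IsMinCEDS (SimpleGraph.pathGraph n) X} =
      {(Finset.univ.filter (fun j : Fin n => 1 ≤ (j : ℕ) ∧ (j : ℕ) ≤ n - 3)).image
          (fun j : Fin n => s(j, j + (⟨1, by omega⟩ : Fin n)))} ∧
    Nat.card {X : Finset (Sym2 (Fin n)) | IsMinCEDS (SimpleGraph.pathGraph n) X} = 1 := by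
  haveI : NeZero n := ⟨by omega⟩
  have hX0eq : (Finset.univ.filter (fun j : Fin n => 1 ≤ (j : ℕ) ∧ (j : ℕ) ≤ n - 3)).image
      (fun j : Fin n => s(j, j + (⟨1, by omega⟩ : Fin n))) = X0 n := by
    ext e
    simp only [Finset.mem_image, Finset.mem_filter, Finset.mem_univ, true_and]
    rw [mem_X0 hn]
    constructor
    · rintro ⟨j, ⟨h1, h2⟩, rfl⟩
      refine ⟨(j : ℕ), h1, h2, ?_⟩
      rw [fe, Sym2.eq_iff]
      left
      constructor
      · exact (Fin.cast_val_eq_self j).symm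
      · apply Fin.ext
        rw [Fin.add_def, cast_val (by omega)]
        simp only
        rw [Nat.mod_eq_of_lt (by omega)]
    · rintro ⟨i, h1, h2, rfl⟩
      refine ⟨((i:ℕ) : Fin n), ⟨?_, ?_⟩, ?_⟩
      · rw [cast_val (by omega)]; omega
      · rw [cast_val (by omega)]; omega
      · rw [fe, Sym2.eq_iff]
        left
        refine ⟨rfl, ?_⟩
        apply Fin.ext
        rw [Fin.add_def, cast_val (by omega), cast_val (by omega)]
        simp only
        rw [Nat.mod_eq_of_lt (by omega)]
  have hset : {X : Finset (Sym2 (Fin n)) | IsMinCEDS (SimpleGraph.pathGraph n) X} =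
      ({X0 n} : Set (Finset (Sym2 (Fin n)))) := by
    ext X
    rw [Set.mem_setOf_eq, Set.mem_singleton_iff]
    constructor
    · rintro ⟨hceds, hmin⟩
      have h1 := (main_bound hn X hceds)
      have h2 := hmin (X0 n) (X0_ceds hn)
      rw [card_X0 hn] at h2
      exact h1.2 (by omega)
    · rintro rfl
      refine ⟨X0_ceds hn, fun Y hY => ?_⟩
      rw [card_X0 hn]
      exact (main_bound hn Y hY).1
  constructor
  · rw [hset, hX0eq]
  · rw [hset]
    simp [Nat.card_coe_set_eq]
end
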